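/- Let t_0(n) denote the coefficient of the lowest-degree term of T_n(x) (the constant term if n ≡ 0,2 mod 3, the coefficient of x if n ≡ 1 mod 3). Then for all m ≥ 1, t_0(3m−1)·t_0(3m+1) = (6m+1)·t_0(3m)^2. -/

import Mathlib

open Polynomial


noncomputable def yvω : ℂ := Complex.exp (2 * Real.pi * Complex.I / 3)

lemma yvω_prim : IsPrimitiveRoot yvω 3 :=
  Complex.isPrimitiveRoot_exp 3 (by norm_num)

lemma yvω3 : yvω ^ 3 = 1 := yvω_prim.pow_eq_one

lemma yvω_ne_zero : yvω ≠ 0 := by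
  intro h
  have := yvω3
  rw [h] at this
  simp at this

lemma yvω_pow_mod (k : ℕ) : yvω ^ k = yvω ^ (k % 3) := by
  conv_lhs => rw [← Nat.div_add_mod k 3]
  rw [pow_add, pow_mul, yvω3, one_pow, one_mul]

lemma yvω_pow_congr {a b : ℕ} (h : a % 3 = b % 3) : yvω ^ a = yvω ^ b := by
  rw [yvω_pow_mod a, yvω_pow_mod b, h]

lemma yvω_pow_ne {a b : ℕ} (h : a % 3 ≠ b % 3) : yvω ^ a ≠ yvω ^ b := by
  rw [yvω_pow_mod a, yvω_pow_mod b]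
  intro hh
  exact h (yvω_prim.pow_inj (Nat.mod_lt _ (by norm_num)) (Nat.mod_lt _ (by norm_num)) hh)

noncomputable def Mz (p : Polynomial ℤ) : Polynomial ℂ := p.map (Int.castRingHom ℂ)

def SymP (c : ℕ) (p : Polynomial ℤ) : Prop :=
  (Mz p).comp (C yvω * X) = C (yvω ^ c) * Mz p

lemma comp_CmulX_coeff (p : Polynomial ℂ) (a : ℂ) (k : ℕ) :
    (p.comp (C a * X)).coeff k = a ^ k * p.coeff k := by
  induction p using Polynomial.induction_on' with
  | add p q hp hq => simp [add_comp, hp, hq, mul_add]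
  | monomial i b =>
    rw [← C_mul_X_pow_eq_monomial, mul_comp, C_comp, X_pow_comp, mul_pow, ← C_pow,
      coeff_C_mul, coeff_C_mul, coeff_X_pow, coeff_C_mul, coeff_X_pow]
    by_cases h : k = i
    · subst h; simp [mul_comm]
    · simp [h, Ne.symm h]

lemma symP_coeff_eq_zero {c : ℕ} {p : Polynomial ℤ} (h : SymP c p) {k : ℕ}
    (hk : k % 3 ≠ c % 3) : p.coeff k = 0 := by
  have h2 := congrArg (fun q => q.coeff k) h
  simp only [comp_CmulX_coeff, coeff_C_mul] at h2
  have h3 : (yvω ^ k - yvω ^ c) * (Mz p).coeff k = 0 := by ring_nf; linear_combination h2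
  rcases mul_eq_zero.mp h3 with h4 | h4
  · exact absurd (by linear_combination h4) (yvω_pow_ne hk)
  · have : ((p.coeff k : ℂ)) = 0 := by
      have := coeff_map (Int.castRingHom ℂ) k (p := p)
      unfold Mz at h4
      rw [this] at h4
      simp only [Int.coe_castRingHom] at h4
      exact_mod_cast h4
    exact_mod_cast this

lemma symP_mul {c d : ℕ} {p q : Polynomial ℤ} (hp : SymP c p) (hq : SymP d q) :
    SymP (c + d) (p * q) := by
  unfold SymP Mz at *
  rw [Polynomial.map_mul, mul_comp, hp, hq, pow_add, C_mul]
  ring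

lemma symP_add {c : ℕ} {p q : Polynomial ℤ} (hp : SymP c p) (hq : SymP c q) :
    SymP c (p + q) := by
  unfold SymP Mz at *
  rw [Polynomial.map_add, add_comp, hp, hq]
  ring

lemma symP_sub {c : ℕ} {p q : Polynomial ℤ} (hp : SymP c p) (hq : SymP c q) :
    SymP c (p - q) := by
  unfold SymP Mz at *
  rw [Polynomial.map_sub, sub_comp, hp, hq]
  ring

lemma symP_X : SymP 1 (Polynomial.X : Polynomial ℤ) := by
  unfold SymP Mz
  simp

lemma symP_one : SymP 0 (1 : Polynomial ℤ) := by
  unfold SymP Mz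
  simp

lemma symP_congr {c d : ℕ} {p : Polynomial ℤ} (h : c % 3 = d % 3) (hp : SymP c p) :
    SymP d p := by
  unfold SymP at *
  rw [← yvω_pow_congr h]
  exact hp

lemma symP_deriv {c : ℕ} {p : Polynomial ℤ} (hp : SymP c p) :
    SymP (c + 2) (Polynomial.derivative p) := by
  unfold SymP Mz at *
  have h2 := congrArg Polynomial.derivative hp
  rw [derivative_comp, Polynomial.derivative_mul, derivative_C, Polynomial.derivative_mul,
    derivative_C, derivative_X] at h2
  rw [← derivative_map] at *
  have hC3 : (C yvω : Polynomial ℂ) ^ 3 = 1 := by rw [← C_pow, yvω3, C_1]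
  have h3 : C yvω * ((Polynomial.derivative (p.map (Int.castRingHom ℂ))).comp (C yvω * X)) =
      C yvω ^ c * Polynomial.derivative (p.map (Int.castRingHom ℂ)) := by
    rw [← C_pow]
    linear_combination h2
  rw [C_pow]
  linear_combination (C yvω)^2 * h3 -
    ((Polynomial.derivative (p.map (Int.castRingHom ℂ))).comp (C yvω * X)) * hC3

lemma symP_cancel {c d e : ℕ} {p q : Polynomial ℤ} (hq : q ≠ 0) (h1 : SymP d q)
    (h2 : SymP e (p * q)) (hc : e % 3 = (c + d) % 3) : SymP c p := by
  unfold SymP Mz at *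
  rw [Polynomial.map_mul, mul_comp, h1, yvω_pow_congr hc, pow_add, C_mul] at h2
  have hq' : (q.map (Int.castRingHom ℂ)) ≠ 0 :=
    (Polynomial.map_ne_zero_iff (f := Int.castRingHom ℂ) (by exact Int.cast_injective)).mpr hq
  have hωd : (C (yvω ^ d) : Polynomial ℂ) ≠ 0 := by
    simp only [ne_eq, C_eq_zero]
    exact pow_ne_zero _ yvω_ne_zero
  apply mul_right_cancel₀ (mul_ne_zero hωd hq')
  linear_combination h2

def ddc (n : ℕ) : ℕ := if n % 3 = 1 then 1 else 0

noncomputable def Hex (T : ℕ → Polynomial ℤ) (n : ℕ) : Polynomial ℤ :=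
  derivative (derivative (T (n+1))) * T n - 2 * derivative (T (n+1)) * derivative (T n)
    + T (n+1) * derivative (derivative (T n))

noncomputable def R2ex (T : ℕ → Polynomial ℤ) (n : ℕ) : Polynomial ℤ :=
  T n * derivative (derivative (derivative (T (n+1))))
    - 2 * derivative (T n) * derivative (derivative (T (n+1)))
    + derivative (derivative (T n)) * derivative (T (n+1))
    + 2 * X * (T n * derivative (T (n+1)) - derivative (T n) * T (n+1))
    - (2 * C ((n : ℤ)) + 2) * (T n * T (n+1))

def CFx (T : ℕ → Polynomial ℤ) (n : ℕ) : Prop :=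
  (n % 3 = 0 → (T n).coeff 0 ≠ 0 ∧ (T n).coeff 3 = ((n / 3 : ℕ) : ℤ) * (T n).coeff 0)
  ∧ (n % 3 = 1 → (T n).coeff 1 ≠ 0)
  ∧ (n % 3 = 2 → (T n).coeff 0 ≠ 0 ∧ (T n).coeff 3 = -(((n / 3 : ℕ) : ℤ) + 1) * (T n).coeff 0)

lemma CFx_ne_zero {T : ℕ → Polynomial ℤ} {n : ℕ} (h : CFx T n) : T n ≠ 0 := by
  obtain ⟨h0, h1, h2⟩ := h
  intro hz
  have hm : n % 3 = 0 ∨ n % 3 = 1 ∨ n % 3 = 2 := by omega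
  rcases hm with hm | hm | hm
  · exact (h0 hm).1 (by rw [hz]; simp)
  · exact (h1 hm) (by rw [hz]; simp)
  · exact (h2 hm).1 (by rw [hz]; simp)

lemma coeff_mul_one' (p q : Polynomial ℤ) :
    (p * q).coeff 1 = p.coeff 0 * q.coeff 1 + p.coeff 1 * q.coeff 0 := by
  rw [Polynomial.coeff_mul, Finset.Nat.sum_antidiagonal_eq_sum_range_succ_mk]
  rw [Finset.sum_range_succ, Finset.sum_range_succ]
  simp

lemma stepSym (T : ℕ → Polynomial ℤ) (n : ℕ)
    (hrn : T (n + 2) * T n = X * T (n + 1) ^ 2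
      + T (n + 1) * derivative (derivative (T (n + 1))) - (derivative (T (n + 1))) ^ 2)
    (hS0 : SymP (ddc n) (T n)) (hS1 : SymP (ddc (n+1)) (T (n+1))) (hTn : T n ≠ 0) :
    SymP (ddc (n+2)) (T (n+2)) := by
  have hrw : T (n+2) * T n = X * T (n+1) * T (n+1)
      + T (n+1) * derivative (derivative (T (n+1)))
      - derivative (T (n+1)) * derivative (T (n+1)) := by rw [hrn]; ring
  have s1 : SymP (1 + ddc (n+1) + ddc (n+1)) (X * T (n+1) * T (n+1)) :=
    symP_mul (symP_mul symP_X hS1) hS1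
  have s2 : SymP (ddc (n+1) + (ddc (n+1) + 2 + 2))
      (T (n+1) * derivative (derivative (T (n+1)))) :=
    symP_mul hS1 (symP_deriv (symP_deriv hS1))
  have s3 : SymP ((ddc (n+1) + 2) + (ddc (n+1) + 2))
      (derivative (T (n+1)) * derivative (T (n+1))) :=
    symP_mul (symP_deriv hS1) (symP_deriv hS1)
  have s1' := symP_congr (show (1 + ddc (n+1) + ddc (n+1)) % 3 = (ddc (n+1) + ddc (n+1) + 4) % 3 by omega) s1
  have s2' := symP_congr (show (ddc (n+1) + (ddc (n+1) + 2 + 2)) % 3 = (ddc (n+1) + ddc (n+1) + 4) % 3 by omega) s2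
  have s3' := symP_congr (show ((ddc (n+1) + 2) + (ddc (n+1) + 2)) % 3 = (ddc (n+1) + ddc (n+1) + 4) % 3 by omega) s3
  have sR : SymP (ddc (n+1) + ddc (n+1) + 4) (T (n+2) * T n) := by
    rw [hrw]
    exact symP_sub (symP_add s1' s2') s3'
  apply symP_cancel hTn hS0 sR
  have hm : n % 3 = 0 ∨ n % 3 = 1 ∨ n % 3 = 2 := by omega
  rcases hm with hm | hm | hm
  · have ha : (n+1) % 3 = 1 := by omega
    have hb : (n+2) % 3 = 2 := by omega
    simp [ddc, hm, ha, hb]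
  · have ha : (n+1) % 3 = 2 := by omega
    have hb : (n+2) % 3 = 0 := by omega
    simp [ddc, hm, ha, hb]
  · have ha : (n+1) % 3 = 0 := by omega
    have hb : (n+2) % 3 = 1 := by omega
    simp [ddc, hm, ha, hb]


lemma stepHR (T : ℕ → Polynomial ℤ) (n : ℕ)
    (hrn : T (n + 2) * T n = X * T (n + 1) ^ 2
      + T (n + 1) * derivative (derivative (T (n + 1))) - (derivative (T (n + 1))) ^ 2)
    (hTn : T n ≠ 0) (hH : Hex T n = 0) (hR : R2ex T n = 0) :
    Hex T (n+1) = 0 ∧ R2ex T (n+1) = 0 := by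
  have hr1 := congrArg derivative hrn
  simp only [derivative_mul, derivative_add, derivative_sub, derivative_X, derivative_pow,
    derivative_one, derivative_ofNat, show (2-1 : ℕ) = 1 from rfl, Nat.cast_ofNat, map_ofNat, Nat.cast_one, map_one, pow_one, one_mul, mul_one] at hr1
  have hr2 := congrArg derivative hr1
  simp only [derivative_mul, derivative_add, derivative_sub, derivative_X, derivative_pow,
    derivative_one, derivative_ofNat, show (2-1 : ℕ) = 1 from rfl, Nat.cast_ofNat, map_ofNat, Nat.cast_one, map_one, pow_one, derivative_C, one_mul, mul_one, Polynomial.derivative_natCast] at hr2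
  have hH' := congrArg derivative hH
  simp only [Hex, derivative_mul, derivative_add, derivative_sub, derivative_X, derivative_pow,
    derivative_one, derivative_ofNat, show (2-1 : ℕ) = 1 from rfl, Nat.cast_ofNat, map_ofNat, Nat.cast_one, map_one, pow_one, derivative_C, derivative_zero, one_mul, mul_one, Polynomial.derivative_natCast] at hH'
  have hR' := congrArg derivative hR
  simp only [R2ex, derivative_mul, derivative_add, derivative_sub, derivative_X, derivative_pow,
    derivative_one, derivative_ofNat, show (2-1 : ℕ) = 1 from rfl, Nat.cast_ofNat, map_ofNat, Nat.cast_one, map_one, pow_one, derivative_C, derivative_zero, one_mul, mul_one, Polynomial.derivative_natCast] at hR'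
  have key1 : (T n)^3 * Hex T (n+1) = 0 := by
    rw [Hex] at hH ⊢
    rw [R2ex] at hR
    linear_combination
      (T (n+1) * (T n)^2) * hr2
      - (2*(T (n+1) * T n * derivative (T n) + derivative (T (n+1)) * (T n)^2)) * hr1
      + (2 * T (n+1) * (derivative (T n))^2 - T (n+1) * T n * derivative (derivative (T n))
         + 2 * derivative (T (n+1)) * T n * derivative (T n)
         + derivative (derivative (T (n+1))) * (T n)^2) * hrn
      + (X * T n * (T (n+1))^2 + T n * (derivative (T (n+1)))^2
         + derivative (T n) * T (n+1) * derivative (T (n+1))) * hH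
      - (T n * T (n+1) * derivative (T (n+1))) * hH'
      - (T n * T (n+1) * derivative (T (n+1)) + derivative (T n) * (T (n+1))^2) * hR
      + (T n * (T (n+1))^2) * hR'
  have hHnew : Hex T (n+1) = 0 :=
    (mul_eq_zero.mp key1).resolve_left (pow_ne_zero 3 hTn)
  refine ⟨hHnew, ?_⟩
  have hHnew' := congrArg derivative hHnew
  simp only [Hex, derivative_mul, derivative_add, derivative_sub, derivative_X, derivative_pow,
    derivative_one, derivative_ofNat, show (2-1 : ℕ) = 1 from rfl, Nat.cast_ofNat, map_ofNat, Nat.cast_one, map_one, pow_one, derivative_C, derivative_zero, one_mul, mul_one] at hHnew'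
  have key2 : (T n)^3 * R2ex T (n+1) = 0 := by
    rw [R2ex] at hR ⊢
    rw [Hex] at hH
    rw [show (C (((n+1 : ℕ) : ℤ)) : Polynomial ℤ) = C ((n : ℤ)) + 1 by
      rw [show ((n+1 : ℕ) : ℤ) = (n : ℤ) + 1 by push_cast; ring, map_add, map_one]]
    linear_combination
      ((T n)^3) * hHnew'
      - (derivative (T (n+1)) * (T n)^2) * hr2
      + (2 * derivative (T (n+1)) * T n * derivative (T n)
         + 2 * derivative (derivative (T (n+1))) * (T n)^2
         + 2 * X * T (n+1) * (T n)^2) * hr1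
      + (-2 * derivative (T (n+1)) * (derivative (T n))^2
         + derivative (T (n+1)) * T n * derivative (derivative (T n))
         - 2 * derivative (derivative (T (n+1))) * T n * derivative (T n)
         - 2 * X * T (n+1) * T n * derivative (T n)
         - derivative (derivative (derivative (T (n+1)))) * (T n)^2
         - 2 * X * derivative (T (n+1)) * (T n)^2
         - 2 * (C ((n : ℤ))) * T (n+1) * (T n)^2
         - 4 * T (n+1) * (T n)^2) * hrn
      + (-2 * X * T n * T (n+1) * derivative (T (n+1))
         - T n * derivative (T (n+1)) * derivative (derivative (T (n+1)))
         - derivative (T n) * (derivative (T (n+1)))^2) * hH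
      + (T n * (derivative (T (n+1)))^2) * hH'
      + (X * T n * (T (n+1))^2 + T n * T (n+1) * derivative (derivative (T (n+1)))
         + derivative (T n) * T (n+1) * derivative (T (n+1))) * hR
      - (T n * T (n+1) * derivative (T (n+1))) * hR'
  exact (mul_eq_zero.mp key2).resolve_left (pow_ne_zero 3 hTn)

lemma stepCF2 (T : ℕ → Polynomial ℤ) (n k : ℕ) (hnk : n = 3*k)
    (hrn : T (n + 2) * T n = X * T (n + 1) ^ 2
      + T (n + 1) * derivative (derivative (T (n + 1))) - (derivative (T (n + 1))) ^ 2)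
    (hRnew : R2ex T (n+1) = 0)
    (ha : (T n).coeff 0 ≠ 0)
    (hb : (T (n+1)).coeff 1 ≠ 0)
    (hu0 : (T (n+1)).coeff 0 = 0)
    (hu2 : (T (n+1)).coeff 2 = 0)
    (hu3 : (T (n+1)).coeff 3 = 0) :
    (T (n+2)).coeff 0 ≠ 0 ∧ (T (n+2)).coeff 3 = -(((k : ℕ) : ℤ) + 1) * (T (n+2)).coeff 0 := by
  have hrw : T (n+2) * T n = X * T (n+1) * T (n+1)
      + T (n+1) * derivative (derivative (T (n+1)))
      - derivative (T (n+1)) * derivative (T (n+1)) := by rw [hrn]; ring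
  have h1 := congrArg (fun p => p.coeff 0) hrw
  simp only [mul_coeff_zero, coeff_add, coeff_sub, coeff_X_zero, coeff_derivative, hu0, hu2,
    zero_mul, mul_zero, zero_add, add_zero, zero_sub, Nat.cast_zero] at h1
  -- h1 : (T (n+2)).coeff 0 * (T n).coeff 0 = -((T (n+1)).coeff 1 * (0+1) * ((T (n+1)).coeff 1 * (0+1)))
  have hAa : (T (n+2)).coeff 0 * (T n).coeff 0 = -((T (n+1)).coeff 1 * (T (n+1)).coeff 1) := by
    linear_combination h1
  have hA : (T (n+2)).coeff 0 ≠ 0 := by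
    intro h
    rw [h, zero_mul] at hAa
    have : (T (n+1)).coeff 1 = 0 := by nlinarith [sq_nonneg ((T (n+1)).coeff 1)]
    exact hb this
  refine ⟨hA, ?_⟩
  subst hnk
  have h2 := congrArg (fun p => p.coeff 1) hRnew
  rw [R2ex] at h2
  simp only [coeff_add, coeff_sub, coeff_mul_one', mul_coeff_zero, coeff_derivative,
    coeff_X_zero, coeff_X_one, coeff_zero, coeff_C, coeff_ofNat_zero, coeff_ofNat_succ,
    show (3:ℕ)*k+1+1 = 3*k+2 from rfl,
    hu0, hu2, hu3, zero_mul, mul_zero, zero_add, add_zero, zero_sub, sub_zero,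
    Nat.cast_zero, Nat.cast_one, Nat.cast_ofNat] at h2
  push_cast at h2
  have h6 : (T (3*k+1)).coeff 1 *
      (6 * (T (3*k+2)).coeff 3 + (6*(k:ℤ) + 6) * (T (3*k+2)).coeff 0) = 0 := by
    linear_combination -h2
  rcases mul_eq_zero.mp h6 with h | h
  · exact absurd h hb
  · linarith

lemma stepCF0 (T : ℕ → Polynomial ℤ) (n k : ℕ) (hnk : n = 3*k+1)
    (hrn : T (n + 2) * T n = X * T (n + 1) ^ 2
      + T (n + 1) * derivative (derivative (T (n + 1))) - (derivative (T (n + 1))) ^ 2)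
    (hRnew : R2ex T (n+1) = 0)
    (hb : (T n).coeff 1 ≠ 0)
    (hu0 : (T n).coeff 0 = 0)
    (hA : (T (n+1)).coeff 0 ≠ 0)
    (hC : (T (n+1)).coeff 3 = -(((k : ℕ) : ℤ) + 1) * (T (n+1)).coeff 0)
    (hv1 : (T (n+1)).coeff 1 = 0)
    (hv2 : (T (n+1)).coeff 2 = 0) :
    (T (n+2)).coeff 0 ≠ 0 ∧ (T (n+2)).coeff 3 = (((k : ℕ) : ℤ) + 1) * (T (n+2)).coeff 0 := by
  subst hnk
  have hrw : T (3*k+3) * T (3*k+1) = X * T (3*k+2) * T (3*k+2)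
      + T (3*k+2) * derivative (derivative (T (3*k+2)))
      - derivative (T (3*k+2)) * derivative (T (3*k+2)) := by
    have := hrn
    simp only [show (3:ℕ)*k+1+1 = 3*k+2 from rfl, show (3:ℕ)*k+1+2 = 3*k+3 from rfl] at this
    rw [this]; ring
  have h1 := congrArg (fun p => p.coeff 1) hrw
  simp only [coeff_add, coeff_sub, coeff_mul_one', mul_coeff_zero, coeff_derivative,
    coeff_X_zero, coeff_X_one, hu0, hv1, hv2,
    zero_mul, mul_zero, zero_add, add_zero, zero_sub, sub_zero, one_mul, mul_one,
    Nat.cast_zero, Nat.cast_one, Nat.cast_ofNat] at h1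
  have hab : (T (3*k+3)).coeff 0 * (T (3*k+1)).coeff 1 =
      -(6*((k:ℕ):ℤ)+5) * ((T (3*k+2)).coeff 0)^2 := by
    linear_combination h1 + 6 * (T (3*k+2)).coeff 0 * hC
  have hα : (T (3*k+3)).coeff 0 ≠ 0 := by
    intro h
    rw [h, zero_mul] at hab
    have h2 : ((T (3*k+2)).coeff 0)^2 > 0 := by positivity
    nlinarith
  refine ⟨hα, ?_⟩
  have h2 := congrArg (fun p => p.coeff 0) hRnew
  rw [R2ex] at h2
  simp only [show (3:ℕ)*k+2+1 = 3*k+3 from rfl, show (3:ℕ)*k+1+1 = 3*k+2 from rfl] at h2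
  simp only [coeff_add, coeff_sub, mul_coeff_zero, coeff_derivative,
    coeff_X_zero, coeff_zero, coeff_C, coeff_ofNat_zero,
    hv1, hv2, zero_mul, mul_zero, zero_add, add_zero, zero_sub, sub_zero,
    Nat.cast_zero, Nat.cast_one, Nat.cast_ofNat] at h2
  push_cast at h2
  have h6 : (T (3*k+2)).coeff 0 *
      (6 * (T (3*k+3)).coeff 3 - (6*((k:ℕ):ℤ) + 6) * (T (3*k+3)).coeff 0) = 0 := by
    linear_combination h2
  rcases mul_eq_zero.mp h6 with h | h
  · exact absurd h hA
  · linarith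

lemma stepCF1 (T : ℕ → Polynomial ℤ) (n k : ℕ) (hnk : n = 3*k+2)
    (hrn : T (n + 2) * T n = X * T (n + 1) ^ 2
      + T (n + 1) * derivative (derivative (T (n + 1))) - (derivative (T (n + 1))) ^ 2)
    (hA : (T n).coeff 0 ≠ 0)
    (hα : (T (n+1)).coeff 0 ≠ 0)
    (hγ : (T (n+1)).coeff 3 = (((k : ℕ) : ℤ) + 1) * (T (n+1)).coeff 0)
    (hw1 : (T (n+1)).coeff 1 = 0)
    (hw2 : (T (n+1)).coeff 2 = 0)
    (hS2 : (T (n+2)).coeff 0 = 0) :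
    (T (n+2)).coeff 1 ≠ 0 ∧ (T (n+2)).coeff 1 * (T n).coeff 0 =
      (6*((k : ℕ) : ℤ)+7) * ((T (n+1)).coeff 0)^2 := by
  subst hnk
  have hrw : T (3*k+4) * T (3*k+2) = X * T (3*k+3) * T (3*k+3)
      + T (3*k+3) * derivative (derivative (T (3*k+3)))
      - derivative (T (3*k+3)) * derivative (T (3*k+3)) := by
    have := hrn
    simp only [show (3:ℕ)*k+2+1 = 3*k+3 from rfl, show (3:ℕ)*k+2+2 = 3*k+4 from rfl] at this
    rw [this]; ring
  have h1 := congrArg (fun p => p.coeff 1) hrw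
  simp only [coeff_add, coeff_sub, coeff_mul_one', mul_coeff_zero, coeff_derivative,
    coeff_X_zero, coeff_X_one, hw1, hw2, hS2,
    zero_mul, mul_zero, zero_add, add_zero, zero_sub, sub_zero, one_mul, mul_one,
    Nat.cast_zero, Nat.cast_one, Nat.cast_ofNat] at h1
  have hkey : (T (3*k+4)).coeff 1 * (T (3*k+2)).coeff 0 =
      (6*((k:ℕ):ℤ)+7) * ((T (3*k+3)).coeff 0)^2 := by
    linear_combination h1 + 6 * (T (3*k+3)).coeff 0 * hγ
  constructor
  · intro h
    rw [h, zero_mul] at hkey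
    have h2 : ((T (3*k+3)).coeff 0)^2 > 0 := by positivity
    nlinarith
  · exact hkey

lemma yv_grand (T : ℕ → Polynomial ℤ) (h0 : T 0 = 1) (h1 : T 1 = X)
    (hrec : ∀ n : ℕ, T (n + 2) * T n =
      X * T (n + 1) ^ 2 + T (n + 1) * derivative (derivative (T (n + 1)))
        - (derivative (T (n + 1))) ^ 2) :
    ∀ n : ℕ, SymP (ddc n) (T n) ∧ SymP (ddc (n+1)) (T (n+1)) ∧ CFx T n ∧ CFx T (n+1)
      ∧ Hex T n = 0 ∧ R2ex T n = 0 := by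
  intro n
  induction n with
  | zero =>
    refine ⟨?_, ?_, ?_, ?_, ?_, ?_⟩
    · rw [show ddc 0 = 0 from rfl, h0]; exact symP_one
    · rw [show ddc 1 = 1 from rfl, h1]; exact symP_X
    · refine ⟨fun _ => ⟨by rw [h0]; simp, by rw [h0]; simp [coeff_one]⟩,
        fun h => by simp at h, fun h => by simp at h⟩
    · refine ⟨fun h => by simp at h, fun _ => by rw [h1]; simp, fun h => by simp at h⟩
    · rw [Hex, h0, h1]; simp
    · rw [R2ex, h0, h1]; simp [derivative_one, derivative_X]
  | succ n ih =>
    obtain ⟨hS0, hS1, hC0, hC1, hH, hR⟩ := ih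
    have hT0 : T n ≠ 0 := CFx_ne_zero hC0
    have hS2 : SymP (ddc (n+2)) (T (n+2)) := stepSym T n (hrec n) hS0 hS1 hT0
    obtain ⟨hHn, hRn⟩ := stepHR T n (hrec n) hT0 hH hR
    have hC2 : CFx T (n+2) := by
      have hm : n % 3 = 0 ∨ n % 3 = 1 ∨ n % 3 = 2 := by omega
      rcases hm with hm | hm | hm
      · obtain ⟨k, hk⟩ : ∃ k, n = 3*k := ⟨n/3, by omega⟩
        have hS1' : SymP 1 (T (n+1)) := by
          have hdd : ddc (n+1) = 1 := by simp [ddc, show (n+1)%3 = 1 by omega]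
          rw [hdd] at hS1; exact hS1
        have hres := stepCF2 T n k hk (hrec n) hRn ((hC0.1 hm).1)
          (hC1.2.1 (by omega))
          (symP_coeff_eq_zero hS1' (by norm_num))
          (symP_coeff_eq_zero hS1' (by norm_num))
          (symP_coeff_eq_zero hS1' (by norm_num))
        refine ⟨fun h => by omega, fun h => by omega, fun _ => ?_⟩
        rw [show (n+2)/3 = k by omega]
        exact hres
      · obtain ⟨k, hk⟩ : ∃ k, n = 3*k+1 := ⟨n/3, by omega⟩
        have hS0' : SymP 1 (T n) := by
          have hdd : ddc n = 1 := by simp [ddc, hm]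
          rw [hdd] at hS0; exact hS0
        have hS1' : SymP 0 (T (n+1)) := by
          have hdd : ddc (n+1) = 0 := by simp [ddc, show (n+1)%3 = 2 by omega]
          rw [hdd] at hS1; exact hS1
        have hCc := hC1.2.2 (by omega)
        rw [show (n+1)/3 = k by omega] at hCc
        have hres := stepCF0 T n k hk (hrec n) hRn (hC0.2.1 hm)
          (symP_coeff_eq_zero hS0' (by norm_num))
          hCc.1 hCc.2
          (symP_coeff_eq_zero hS1' (by norm_num))
          (symP_coeff_eq_zero hS1' (by norm_num))
        refine ⟨fun _ => ?_, fun h => by omega, fun h => by omega⟩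
        rw [show (n+2)/3 = k+1 by omega]
        refine ⟨hres.1, ?_⟩
        rw [hres.2]; push_cast; ring
      · obtain ⟨k, hk⟩ : ∃ k, n = 3*k+2 := ⟨n/3, by omega⟩
        have hS1' : SymP 0 (T (n+1)) := by
          have hdd : ddc (n+1) = 0 := by simp [ddc, show (n+1)%3 = 0 by omega]
          rw [hdd] at hS1; exact hS1
        have hS2' : SymP 1 (T (n+2)) := by
          have hdd : ddc (n+2) = 1 := by simp [ddc, show (n+2)%3 = 1 by omega]
          rw [hdd] at hS2; exact hS2
        have hCc := hC1.1 (by omega)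
        rw [show (n+1)/3 = k+1 by omega] at hCc
        have hγ : (T (n+1)).coeff 3 = (((k : ℕ) : ℤ) + 1) * (T (n+1)).coeff 0 := by
          rw [hCc.2]; push_cast; ring
        have hres := stepCF1 T n k hk (hrec n) ((hC0.2.2 hm).1) hCc.1 hγ
          (symP_coeff_eq_zero hS1' (by norm_num))
          (symP_coeff_eq_zero hS1' (by norm_num))
          (symP_coeff_eq_zero hS2' (by norm_num))
        exact ⟨fun h => by omega, fun _ => hres.1, fun h => by omega⟩
    exact ⟨hS1, hS2, hC1, hC2, hHn, hRn⟩

theorem yv_t0_relation_one (T : ℕ → Polynomial ℤ)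
    (h0 : T 0 = 1) (h1 : T 1 = X)
    (hrec : ∀ n : ℕ, T (n + 2) * T n =
      X * T (n + 1) ^ 2 + T (n + 1) * derivative (derivative (T (n + 1)))
        - (derivative (T (n + 1))) ^ 2) :
    ∀ m : ℕ, 1 ≤ m →
      (T (3 * m - 1)).coeff 0 * (T (3 * m + 1)).coeff 1 =
        (6 * (m : ℤ) + 1) * ((T (3 * m)).coeff 0) ^ 2 := by
  intro m hm
  obtain ⟨k, rfl⟩ : ∃ k, m = k+1 := ⟨m-1, by omega⟩
  obtain ⟨hSa, hSw, hCa, hCw, -, -⟩ := yv_grand T h0 h1 hrec (3*k+2)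
  obtain ⟨-, hSnew, -, -, -, -⟩ := yv_grand T h0 h1 hrec (3*k+3)
  simp only [show (3:ℕ)*k+2+1 = 3*k+3 from rfl] at hSw hCw
  simp only [show (3:ℕ)*k+3+1 = 3*k+4 from rfl] at hSnew
  have hA : (T (3*k+2)).coeff 0 ≠ 0 := (hCa.2.2 (by omega)).1
  have hCc := hCw.1 (by omega)
  rw [show (3*k+3)/3 = k+1 by omega] at hCc
  have hγ : (T (3*k+3)).coeff 3 = (((k : ℕ) : ℤ) + 1) * (T (3*k+3)).coeff 0 := by
    rw [hCc.2]; push_cast; ring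
  have hSw' : SymP 0 (T (3*k+3)) := by
    have hdd : ddc (3*k+3) = 0 := by simp [ddc, show (3*k+3)%3 = 0 by omega]
    rw [hdd] at hSw; exact hSw
  have hSnew' : SymP 1 (T (3*k+4)) := by
    have hdd : ddc (3*k+4) = 1 := by simp [ddc, show (3*k+4)%3 = 1 by omega]
    rw [hdd] at hSnew; exact hSnew
  have hres := stepCF1 T (3*k+2) k rfl (hrec (3*k+2)) hA hCc.1 hγ
    (symP_coeff_eq_zero hSw' (by norm_num))
    (symP_coeff_eq_zero hSw' (by norm_num))
    (symP_coeff_eq_zero hSnew' (by norm_num))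
  have hkey := hres.2
  rw [show 3*(k+1)-1 = 3*k+2 by omega, show 3*(k+1)+1 = 3*k+4 by omega,
    show 3*(k+1) = 3*k+3 by omega]
  push_cast
  push_cast at hkey
  linear_combination hkey
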